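/- Let P be a metric space and H(P) its combinatorial horoball. For any two vertices (p,0), (q,0) at level zero with d(p,q) ≥ 1, the graph distance satisfies d_H((p,0),(q,0)) ≤ 2·log₂(d(p,q)) + 3. -/

import Mathlib

/-- The combinatorial horoball on a metric space `P`: vertices are `P × ℕ`;
`(p, l)` and `(q, l)` are joined by a horizontal edge when `0 < d(p,q) ≤ 2 ^ l`, and
`(p, l)`, `(p, l+1)` are joined by a vertical edge. -/
def horoball (P : Type*) [MetricSpace P] : SimpleGraph (P × ℕ) where
  Adj x y := (x.2 = y.2 ∧ 0 < dist x.1 y.1 ∧ dist x.1 y.1 ≤ 2 ^ x.2) ∨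
    (x.1 = y.1 ∧ (y.2 = x.2 + 1 ∨ x.2 = y.2 + 1))
  symm := by
    constructor
    rintro ⟨p, l⟩ ⟨q, m⟩ (⟨h1, h2, h3⟩ | ⟨h1, h2⟩)
    · subst h1
      exact Or.inl ⟨rfl, by rwa [dist_comm], by rwa [dist_comm]⟩
    · exact Or.inr ⟨h1.symm, h2.symm⟩
  loopless := by
    constructor
    rintro ⟨p, l⟩ (⟨_, h2, _⟩ | ⟨_, h2 | h2⟩) <;> simp_all

/-- The vertical walk from `(p, 0)` up to `(p, l)`. -/
def horoball.vertWalk {P : Type*} [MetricSpace P] (p : P) :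
    ∀ l : ℕ, (horoball P).Walk (p, 0) (p, l)
  | 0 => SimpleGraph.Walk.nil
  | l + 1 => (horoball.vertWalk p l).concat (Or.inr ⟨rfl, Or.inl rfl⟩)

lemma horoball.vertWalk_length {P : Type*} [MetricSpace P] (p : P) (l : ℕ) :
    (horoball.vertWalk p l).length = l := by
  induction l with
  | zero => rfl
  | succ n ih => exact (SimpleGraph.Walk.length_concat (horoball.vertWalk p n) _).trans (congrArg (· + 1) ih)

/-- For points at level zero with `d(p,q) ≥ 1`, the horoball graph distance satisfies
`d_H((p,0),(q,0)) ≤ 2 log₂ d(p,q) + 3`. -/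
theorem horoball_dist_log_bound {P : Type*} [MetricSpace P] (p q : P)
    (h : 1 ≤ dist p q) :
    ((horoball P).dist (p, 0) (q, 0) : ℝ) ≤ 2 * Real.logb 2 (dist p q) + 3 := by
  have hd0 : (0 : ℝ) < dist p q := lt_of_lt_of_le one_pos h
  have hlogb0 : 0 ≤ Real.logb 2 (dist p q) :=
    Real.logb_nonneg one_lt_two h
  set l : ℕ := ⌈Real.logb 2 (dist p q)⌉₊ with hl
  have hle : Real.logb 2 (dist p q) ≤ (l : ℝ) := Nat.le_ceil _
  have hdle : dist p q ≤ 2 ^ l := by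
    have : dist p q = (2 : ℝ) ^ Real.logb 2 (dist p q) :=
      (Real.rpow_logb two_pos (by norm_num) hd0).symm
    rw [this]
    calc (2 : ℝ) ^ Real.logb 2 (dist p q) ≤ (2 : ℝ) ^ (l : ℝ) :=
          Real.rpow_le_rpow_of_exponent_le one_le_two hle
      _ = 2 ^ l := by rw [Real.rpow_natCast]
  -- the horizontal edge at level l
  have hadj : (horoball P).Adj (p, l) (q, l) :=
    Or.inl ⟨rfl, hd0, hdle⟩
  -- the full walk
  let w : (horoball P).Walk (p, 0) (q, 0) :=
    (horoball.vertWalk p l).append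
      (SimpleGraph.Walk.cons hadj (horoball.vertWalk q l).reverse)
  have hwlen : w.length = 2 * l + 1 := by
    simp [w, SimpleGraph.Walk.length_append, SimpleGraph.Walk.length_cons,
      SimpleGraph.Walk.length_reverse, horoball.vertWalk_length]
    ring
  have hdist : (horoball P).dist (p, 0) (q, 0) ≤ 2 * l + 1 :=
    hwlen ▸ SimpleGraph.dist_le w
  have hceil : (l : ℝ) < Real.logb 2 (dist p q) + 1 :=
    Nat.ceil_lt_add_one hlogb0
  calc ((horoball P).dist (p, 0) (q, 0) : ℝ) ≤ ((2 * l + 1 : ℕ) : ℝ) := by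
        exact_mod_cast hdist
    _ = 2 * (l : ℝ) + 1 := by push_cast; ring
    _ ≤ 2 * (Real.logb 2 (dist p q) + 1) + 1 := by linarith
    _ = 2 * Real.logb 2 (dist p q) + 3 := by ring
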